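/- (Resolvent bound from propagator decay.) Let P be a (possibly non-self-adjoint) bounded operator on a Hilbert space generating a semigroup U₁(t) satisfying: ‖U₁(t)‖ ≤ 1 + Ch for 0 ≤ t ≤ T_E, ‖U₁(t)‖ ≤ C₀ h^{-n/2} e^{-λt} for T_E ≤ t ≤ T_M, and ‖U₁(t)‖ ≤ h^{M/C₀} for t ≥ T_M, where T_E = n log(1/h)/(2λ) and T_M = M log(1/h). Then for Im z > 0, the integral (1/h)∫₀^∞ U₁(t) e^{itz/h} dt converges in operator norm and its norm is bounded by T_E(h)/h + C/(hλ + Im z) + h^{M/C₀}/Im z. -/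

import Mathlib

open MeasureTheory

set_option maxHeartbeats 1000000
set_option synthInstance.maxHeartbeats 400000

lemma intExpNeg (a c : ℝ) (ha : 0 < a) :
    ∫ t in Set.Ioi c, Real.exp (-(a * t)) = Real.exp (-(a * c)) / a := by
  have hderiv : ∀ x ∈ Set.Ici c,
      HasDerivAt (fun t => -Real.exp (-(a * t)) / a) (Real.exp (-(a * x))) x := by
    intro x _
    have h1 : HasDerivAt (fun t : ℝ => -(a * t)) (-a) x := by
      simpa [Pi.neg_def] using ((hasDerivAt_id x).const_mul a).neg
    have h2 := (Real.hasDerivAt_exp (-(a * x))).comp x h1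
    have h3 := h2.neg.div_const a
    exact h3.congr_deriv (by field_simp)
  have hint : IntegrableOn (fun t => Real.exp (-(a * t))) (Set.Ioi c) := by
    simpa [neg_mul] using exp_neg_integrableOn_Ioi c ha
  have htend : Filter.Tendsto (fun t => -Real.exp (-(a * t)) / a) Filter.atTop (nhds 0) := by
    have h0 : Filter.Tendsto (fun t : ℝ => a * t) Filter.atTop Filter.atTop :=
      Filter.Tendsto.const_mul_atTop ha Filter.tendsto_id
    have : Filter.Tendsto (fun t : ℝ => -(a * t)) Filter.atTop Filter.atBot :=
      Filter.tendsto_neg_atTop_atBot.comp h0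
    have := (Real.tendsto_exp_atBot.comp this).neg.div_const a
    simpa using this
  have := integral_Ioi_of_hasDerivAt_of_tendsto' hderiv hint htend
  rw [this]
  field_simp
  ring

/-- Resolvent bound from propagator decay (core of Lemma 8.3): if the propagator `U₁(t)`
satisfies `‖U₁(t)‖ ≤ 1 + Ch` up to the Ehrenfest time `T_E = n log(1/h)/(2λ)`,
`‖U₁(t)‖ ≤ C₀ h^{-n/2} e^{-λt}` for `T_E ≤ t ≤ T_M = M log(1/h)`, and
`‖U₁(t)‖ ≤ h^{M/C₀}` afterwards, then for `Im z > 0` the integral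
`(1/h)∫₀^∞ U₁(t) e^{itz/h} dt` converges in operator norm, with norm at most
`(1+Ch)T_E/h + C₀/(hλ + Im z) + h^{M/C₀}/Im z`. -/
theorem stmt13 {H : Type*} [NormedAddCommGroup H] [InnerProductSpace ℂ H] [CompleteSpace H]
    (h lam C C₀ M n : ℝ) (hh : 0 < h) (hh1 : h ≤ 1) (hlam : 0 < lam) (hC : 0 < C)
    (hC₀ : 0 < C₀) (hM : 0 < M) (hn : 0 < n)
    (U₁ : ℝ → H →L[ℂ] H) (hcont : Continuous U₁)
    (TE TM : ℝ) (hTE : TE = n * Real.log (1 / h) / (2 * lam))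
    (hTM : TM = M * Real.log (1 / h))
    (hU1 : ∀ t : ℝ, 0 ≤ t → t ≤ TE → ‖U₁ t‖ ≤ 1 + C * h)
    (hU2 : ∀ t : ℝ, TE ≤ t → t ≤ TM → ‖U₁ t‖ ≤ C₀ * h ^ (-n / 2) * Real.exp (-lam * t))
    (hU3 : ∀ t : ℝ, TM ≤ t → ‖U₁ t‖ ≤ h ^ (M / C₀))
    (z : ℂ) (hz : 0 < z.im) :
    IntegrableOn (fun t : ℝ => Complex.exp (Complex.I * (t : ℂ) * z / (h : ℂ)) • U₁ t)
        (Set.Ioi (0 : ℝ)) ∧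
      ‖(1 / h : ℝ) •
          ∫ t in Set.Ioi (0 : ℝ), Complex.exp (Complex.I * (t : ℂ) * z / (h : ℂ)) • U₁ t‖ ≤
        (1 + C * h) * TE / h + C₀ / (h * lam + z.im) + h ^ (M / C₀) / z.im := by
  set f : ℝ → H →L[ℂ] H :=
    fun t : ℝ => Complex.exp (Complex.I * (t : ℂ) * z / (h : ℂ)) • U₁ t with hf
  set b : ℝ := z.im / h with hbdef
  have hb : 0 < b := div_pos hz hh
  set a : ℝ := lam + b with hadef
  have ha : 0 < a := by positivity
  have hlog : 0 ≤ Real.log (1 / h) := Real.log_nonneg (one_le_one_div hh hh1)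
  have hTE0 : 0 ≤ TE := by
    rw [hTE]; positivity
  have hTM0 : 0 ≤ TM := by
    rw [hTM]; positivity
  set T2 : ℝ := max TE TM with hT2def
  have hTET2 : TE ≤ T2 := le_max_left _ _
  have hTMT2 : TM ≤ T2 := le_max_right _ _
  have hT20 : 0 ≤ T2 := le_trans hTE0 hTET2
  -- continuity of f
  have hfc : Continuous f := by
    refine Continuous.smul (f := fun t : ℝ => Complex.exp (Complex.I * (t : ℂ) * z / (h : ℂ))) ?_ hcont
    exact Complex.continuous_exp.comp (by continuity)
  -- pointwise norm
  have hnorm : ∀ t : ℝ, ‖f t‖ = Real.exp (-(b * t)) * ‖U₁ t‖ := by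
    intro t
    rw [hf]
    rw [norm_smul (Complex.exp (Complex.I * (t : ℂ) * z / (h : ℂ))) (U₁ t),
      Complex.norm_exp]
    congr 2
    have : Complex.I * (t : ℂ) * z / (h : ℂ) = ((t / h : ℝ) : ℂ) * (Complex.I * z) := by
      push_cast; ring
    rw [this]
    simp [Complex.mul_re, hbdef]
    ring
  -- integrability on the three pieces
  have I1 : IntegrableOn f (Set.Ioc 0 TE) := hfc.integrableOn_Ioc
  have I2 : IntegrableOn f (Set.Ioc TE T2) := hfc.integrableOn_Ioc
  have hgint : IntegrableOn (fun t => h ^ (M / C₀) * Real.exp (-(b * t))) (Set.Ioi T2) := by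
    have hg1 : IntegrableOn (fun t => Real.exp (-(b * t))) (Set.Ioi T2) := by
      simpa [neg_mul] using exp_neg_integrableOn_Ioi T2 hb
    exact hg1.const_mul _
  have I3 : IntegrableOn f (Set.Ioi T2) := by
    apply Integrable.mono' hgint (hfc.aestronglyMeasurable.restrict)
    filter_upwards [ae_restrict_mem measurableSet_Ioi] with t ht
    rw [hnorm t]
    rw [mul_comm]
    exact mul_le_mul_of_nonneg_right (hU3 t (le_of_lt (lt_of_le_of_lt hTMT2 ht)))
      (Real.exp_nonneg _)
  have hsetun : Set.Ioi (0 : ℝ) = Set.Ioc 0 TE ∪ (Set.Ioc TE T2 ∪ Set.Ioi T2) := by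
    rw [Set.Ioc_union_Ioi_eq_Ioi hTET2, Set.Ioc_union_Ioi_eq_Ioi hTE0]
  have hI : IntegrableOn f (Set.Ioi (0 : ℝ)) := by
    rw [hsetun]
    exact I1.union (I2.union I3)
  refine ⟨hI, ?_⟩
  -- bound the three pieces of the integral of the norm
  have hA : ∫ t in Set.Ioc 0 TE, ‖f t‖ ≤ (1 + C * h) * TE := by
    have := setIntegral_mono_on I1.norm (integrableOn_const (C := 1 + C * h) measure_Ioc_lt_top.ne)
      measurableSet_Ioc (fun t ht => by
        rw [hnorm t]
        have h1 : Real.exp (-(b * t)) ≤ 1 := by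
          apply Real.exp_le_one_iff.2
          have : 0 ≤ b * t := mul_nonneg hb.le ht.1.le
          linarith
        calc Real.exp (-(b * t)) * ‖U₁ t‖ ≤ 1 * (1 + C * h) :=
              mul_le_mul h1 (hU1 t ht.1.le ht.2) (norm_nonneg _) one_pos.le
          _ = 1 + C * h := one_mul _)
    refine le_trans this ?_
    rw [setIntegral_const]
    simp [Real.volume_Ioc, ENNReal.toReal_ofReal hTE0]
    ring_nf
    rw [max_eq_left hTE0]; nlinarith
  have hB : ∫ t in Set.Ioc TE T2, ‖f t‖ ≤ C₀ / a := by
    have step1 : ∫ t in Set.Ioc TE T2, ‖f t‖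
        ≤ ∫ t in Set.Ioc TE T2, C₀ * h ^ (-n / 2) * Real.exp (-(a * t)) := by
      have hg1 : IntegrableOn (fun t => Real.exp (-(a * t))) (Set.Ioi TE) := by
        simpa [neg_mul] using exp_neg_integrableOn_Ioi TE ha
      have hg2 : IntegrableOn (fun t => C₀ * h ^ (-n / 2) * Real.exp (-(a * t)))
          (Set.Ioc TE T2) :=
        (hg1.mono_set Set.Ioc_subset_Ioi_self).const_mul _
      apply setIntegral_mono_on I2.norm hg2 measurableSet_Ioc
      intro t ht
      have htTM : t ≤ TM := by
        rcases le_total TM TE with hc | hc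
        · exact absurd ht.2 (by simp [hT2def, max_eq_left hc]; exact ht.1)
        · simpa [hT2def, max_eq_right hc] using ht.2
      rw [hnorm t]
      have := hU2 t ht.1.le htTM
      calc Real.exp (-(b * t)) * ‖U₁ t‖
          ≤ Real.exp (-(b * t)) * (C₀ * h ^ (-n / 2) * Real.exp (-lam * t)) :=
            mul_le_mul_of_nonneg_left this (Real.exp_nonneg _)
        _ = C₀ * h ^ (-n / 2) * Real.exp (-(a * t)) := by
            rw [hadef, mul_comm (Real.exp _), mul_assoc, ← Real.exp_add]
            ring_nf
    have step2 : ∫ t in Set.Ioc TE T2, C₀ * h ^ (-n / 2) * Real.exp (-(a * t))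
        ≤ ∫ t in Set.Ioi TE, C₀ * h ^ (-n / 2) * Real.exp (-(a * t)) := by
      have hg1 : IntegrableOn (fun t => Real.exp (-(a * t))) (Set.Ioi TE) := by
        simpa [neg_mul] using exp_neg_integrableOn_Ioi TE ha
      apply setIntegral_mono_set (hg1.const_mul _)
      · filter_upwards with t
        positivity
      · exact HasSubset.Subset.eventuallyLE Set.Ioc_subset_Ioi_self
    have step3 : ∫ t in Set.Ioi TE, C₀ * h ^ (-n / 2) * Real.exp (-(a * t))
        = C₀ * h ^ (-n / 2) * (Real.exp (-(a * TE)) / a) := by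
      rw [← intExpNeg a TE ha, ← integral_const_mul]
    have hexpTE : Real.exp (-(lam * TE)) = h ^ (n / 2) := by
      rw [Real.rpow_def_of_pos hh]
      congr 1
      rw [hTE, Real.log_div one_ne_zero hh.ne', Real.log_one]
      field_simp
      ring
    have step4 : C₀ * h ^ (-n / 2) * (Real.exp (-(a * TE)) / a) ≤ C₀ / a := by
      have hsplit : Real.exp (-(a * TE)) = Real.exp (-(lam * TE)) * Real.exp (-(b * TE)) := by
        rw [← Real.exp_add, hadef]; ring_nf
      have hle1 : Real.exp (-(b * TE)) ≤ 1 :=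
        Real.exp_le_one_iff.2 (by nlinarith)
      have hhn : h ^ (-n / 2) * h ^ (n / 2) = 1 := by
        rw [← Real.rpow_add hh]
        norm_num [neg_div]
      calc C₀ * h ^ (-n / 2) * (Real.exp (-(a * TE)) / a)
          ≤ C₀ * h ^ (-n / 2) * (h ^ (n / 2) / a) := by
            gcongr
            rw [hsplit, ← hexpTE]
            nlinarith [Real.exp_nonneg (-(lam * TE)), Real.exp_nonneg (-(b * TE))]
        _ = C₀ / a := by
            rw [mul_assoc, ← mul_div_assoc, hhn]
            ring
    linarith [le_trans step1 (le_trans step2 (le_of_eq step3)), step4]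
  have hCc : ∫ t in Set.Ioi T2, ‖f t‖ ≤ h ^ (M / C₀) / b := by
    have step1 : ∫ t in Set.Ioi T2, ‖f t‖
        ≤ ∫ t in Set.Ioi T2, h ^ (M / C₀) * Real.exp (-(b * t)) := by
      apply setIntegral_mono_on I3.norm hgint measurableSet_Ioi
      intro t ht
      rw [hnorm t, mul_comm]
      exact mul_le_mul_of_nonneg_right (hU3 t (le_of_lt (lt_of_le_of_lt hTMT2 ht)))
        (Real.exp_nonneg _)
    have step2 : ∫ t in Set.Ioi T2, h ^ (M / C₀) * Real.exp (-(b * t))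
        = h ^ (M / C₀) * (Real.exp (-(b * T2)) / b) := by
      rw [← intExpNeg b T2 hb, ← integral_const_mul]
    have step3 : h ^ (M / C₀) * (Real.exp (-(b * T2)) / b) ≤ h ^ (M / C₀) / b := by
      have hle1 : Real.exp (-(b * T2)) ≤ 1 :=
        Real.exp_le_one_iff.2 (by nlinarith)
      calc h ^ (M / C₀) * (Real.exp (-(b * T2)) / b) ≤ h ^ (M / C₀) * (1 / b) := by
            gcongr
        _ = h ^ (M / C₀) / b := by ring
    linarith [le_trans step1 (le_of_eq step2), step3]
  -- combine
  have hnI : ∫ t in Set.Ioi (0 : ℝ), ‖f t‖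
      ≤ (1 + C * h) * TE + C₀ / a + h ^ (M / C₀) / b := by
    have e1 : ∫ t in Set.Ioi (0 : ℝ), ‖f t‖ =
        (∫ t in Set.Ioc 0 TE, ‖f t‖) + ((∫ t in Set.Ioc TE T2, ‖f t‖)
          + ∫ t in Set.Ioi T2, ‖f t‖) := by
      have hdisj1 : Disjoint (Set.Ioc (0:ℝ) TE) (Set.Ioc TE T2 ∪ Set.Ioi T2) := by
        rw [Set.Ioc_union_Ioi_eq_Ioi hTET2]
        exact Set.Ioc_disjoint_Ioi le_rfl
      have hdisj2 : Disjoint (Set.Ioc TE T2) (Set.Ioi T2) := Set.Ioc_disjoint_Ioi le_rfl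
      rw [hsetun, setIntegral_union hdisj1 (measurableSet_Ioc.union measurableSet_Ioi)
        I1.norm ((I2.union I3).norm),
        setIntegral_union hdisj2 measurableSet_Ioi I2.norm I3.norm]
    rw [e1]
    linarith [hA, hB, hCc]
  have hnormle : ‖∫ t in Set.Ioi (0 : ℝ), f t‖ ≤ (1 + C * h) * TE + C₀ / a + h ^ (M / C₀) / b :=
    le_trans (norm_integral_le_integral_norm f) hnI
  have hfinal : (1 / h) * ((1 + C * h) * TE + C₀ / a + h ^ (M / C₀) / b)
      = (1 + C * h) * TE / h + C₀ / (h * lam + z.im) + h ^ (M / C₀) / z.im := by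
    rw [hadef, hbdef]
    have hzim : z.im ≠ 0 := hz.ne'
    have hd : h * lam + z.im ≠ 0 := by positivity
    field_simp
  calc ‖(1 / h : ℝ) • ∫ t in Set.Ioi (0 : ℝ), f t‖
      = (1 / h) * ‖∫ t in Set.Ioi (0 : ℝ), f t‖ := by
        rw [norm_smul, Real.norm_of_nonneg (by positivity)]
    _ ≤ (1 / h) * ((1 + C * h) * TE + C₀ / a + h ^ (M / C₀) / b) :=
        mul_le_mul_of_nonneg_left hnormle (by positivity)
    _ = _ := hfinal
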